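/- Let F be a field and k ≥ 1, let p(x) ∈ F[x] be a monic polynomial of degree k with p(0) ≠ 0, and let A ∈ M_{2k}(F) be the block-diagonal matrix with blocks 0_{k×k} and the companion matrix C(p(x)). If N ∈ M_{2k}(F) is a square-zero matrix such that A + N is invertible, then the lower-left k×k block of N (the submatrix with entries N_{i,j} for k+1 ≤ i ≤ 2k and 1 ≤ j ≤ k) is an invertible matrix in M_k(F). -/

import Mathlib

open Polynomial Matrix

/-- The companion matrix of a (monic) polynomial `p`, as a `k × k` matrix:
1's on the subdiagonal, last column `(-p.coeff 0, …, -p.coeff (k-1))ᵀ`, zeros elsewhere. -/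
def companionMatrix {F : Type*} [Field F] (k : ℕ) (p : Polynomial F) :
    Matrix (Fin k) (Fin k) F :=
  Matrix.of fun i j =>
    if (j : ℕ) = k - 1 then -p.coeff i
    else if (i : ℕ) = (j : ℕ) + 1 then 1 else 0

theorem squareZero_lowerLeft_invertible
    (F : Type*) [Field F] (k : ℕ) (hk : 1 ≤ k)
    (p : Polynomial F) (hp : p.Monic) (hpdeg : p.natDegree = k) (hp0 : p.coeff 0 ≠ 0)
    (A : Matrix (Fin k ⊕ Fin k) (Fin k ⊕ Fin k) F)
    (hA : A = Matrix.fromBlocks 0 0 0 (companionMatrix k p))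
    (N : Matrix (Fin k ⊕ Fin k) (Fin k ⊕ Fin k) F)
    (hN : N ^ 2 = 0) (hInv : IsUnit (A + N)) :
    IsUnit N.toBlocks₂₁ := by
  set a := N.toBlocks₁₁ with ha
  set b := N.toBlocks₁₂ with hb
  set c := N.toBlocks₂₁ with hc
  set d := N.toBlocks₂₂ with hd
  have hNblocks : N = Matrix.fromBlocks a b c d := (Matrix.fromBlocks_toBlocks N).symm
  -- block equations from N^2 = 0
  have hsq : Matrix.fromBlocks (a * a + b * c) (a * b + b * d)
      (c * a + d * c) (c * b + d * d) = (0 : Matrix _ _ F) := by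
    rw [← Matrix.fromBlocks_multiply, ← hNblocks, ← pow_two, hN]
  have h11 : a * a + b * c = 0 := by
    have := congrArg Matrix.toBlocks₁₁ hsq
    have h0 : (0 : Matrix (Fin k ⊕ Fin k) (Fin k ⊕ Fin k) F).toBlocks₁₁ = 0 := by ext i j; rfl
    simpa [h0] using this
  have h21 : c * a + d * c = 0 := by
    have := congrArg Matrix.toBlocks₂₁ hsq
    have h0 : (0 : Matrix (Fin k ⊕ Fin k) (Fin k ⊕ Fin k) F).toBlocks₂₁ = 0 := by ext i j; rfl
    simpa [h0] using this
  by_contra hcu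
  -- c is singular, get v ≠ 0 with c *ᵥ v = 0
  have hdet : c.det = 0 := by
    by_contra h
    exact hcu ((Matrix.isUnit_iff_isUnit_det c).2 (isUnit_iff_ne_zero.2 h))
  obtain ⟨v, hv0, hcv⟩ := (Matrix.exists_mulVec_eq_zero_iff).2 hdet
  -- produce y ≠ 0 with a *ᵥ y = 0 and c *ᵥ y = 0
  obtain ⟨y, hy0, hay, hcy⟩ :
      ∃ y, y ≠ 0 ∧ a.mulVec y = 0 ∧ c.mulVec y = 0 := by
    by_cases hav : a.mulVec v = 0
    · exact ⟨v, hv0, hav, hcv⟩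
    · refine ⟨a.mulVec v, hav, ?_, ?_⟩
      · have : (a * a + b * c).mulVec v = 0 := by rw [h11]; simp
        rw [Matrix.mulVec_mulVec]
        have hbc : (b * c) *ᵥ v = 0 := by rw [← Matrix.mulVec_mulVec, hcv]; simp
        rw [Matrix.add_mulVec, hbc, add_zero] at this
        exact this
      · have : (c * a + d * c).mulVec v = 0 := by rw [h21]; simp
        rw [Matrix.mulVec_mulVec]
        have hdc : (d * c) *ᵥ v = 0 := by rw [← Matrix.mulVec_mulVec, hcv]; simp
        rw [Matrix.add_mulVec, hdc, add_zero] at this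
        exact this
  -- build a kernel vector of A + N
  set w : (Fin k ⊕ Fin k) → F := Sum.elim y 0 with hw
  have hw0 : w ≠ 0 := by
    intro h
    apply hy0
    funext i
    have := congrFun h (Sum.inl i)
    simpa [hw] using this
  have hAw : A.mulVec w = 0 := by
    rw [hA, hw, Matrix.fromBlocks_mulVec]
    simp
  have hNw : N.mulVec w = 0 := by
    rw [hNblocks, hw, Matrix.fromBlocks_mulVec]
    simp [hay, hcy]
  have hker : (A + N).mulVec w = 0 := by
    rw [Matrix.add_mulVec, hAw, hNw, add_zero]
  have : (A + N).det = 0 :=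
    (Matrix.exists_mulVec_eq_zero_iff).1 ⟨w, hw0, hker⟩
  have : ¬ IsUnit (A + N) := by
    rw [Matrix.isUnit_iff_isUnit_det, this]
    simp
  exact this hInv
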